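/- Let N ≥ 2, let d_1, …, d_N ≥ 1, and let {x_1^{(i)} ⊗ ⋯ ⊗ x_N^{(i)}}_{i∈X} be a finite family of fully product vectors in ℂ^{d_1} ⊗ ⋯ ⊗ ℂ^{d_N} with |X| ≥ d_1 + ⋯ + d_N − N + 1. Assume that for every k ∈ {1,…,N} and every subset T ⊆ X with |T| = d_k the vectors {x_k^{(i)} : i ∈ T} span ℂ^{d_k}. Then no nonzero fully product vector y_1 ⊗ ⋯ ⊗ y_N is orthogonal to all members of the family; that is, if ⟨x_1^{(i)} ⊗ ⋯ ⊗ x_N^{(i)}, y_1 ⊗ ⋯ ⊗ y_N⟩ = 0 for all i ∈ X, then y_1 ⊗ ⋯ ⊗ y_N = 0. -/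

import Mathlib

open scoped InnerProductSpace

noncomputable section

/-- The tensor product `v 1 ⊗ ⋯ ⊗ v N` of a family of local vectors `v i ∈ ℂ^{d i}`,
realized in `ℂ^{d 1} ⊗ ⋯ ⊗ ℂ^{d N} ≅ ℂ^{∏ d i}`, whose coordinate at a tuple `f` of
local indices is `∏ i, (v i) (f i)`. -/
def prodVec {N : ℕ} {d : Fin N → ℕ} (v : ∀ i, EuclideanSpace ℂ (Fin (d i))) :
    EuclideanSpace ℂ (∀ i, Fin (d i)) :=
  WithLp.toLp 2 (fun f => ∏ i, v i (f i))

lemma inner_prodVec {N : ℕ} {d : Fin N → ℕ} (v w : ∀ i, EuclideanSpace ℂ (Fin (d i))) :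
    ⟪prodVec v, prodVec w⟫_ℂ = ∏ i, ⟪v i, w i⟫_ℂ := by
  simp only [prodVec, PiLp.inner_apply, RCLike.inner_apply, PiLp.toLp_apply, map_prod,
    ← Finset.prod_mul_distrib]
  rw [Finset.prod_univ_sum, Fintype.piFinset_univ]

/-- If `{x_1^{(i)} ⊗ ⋯ ⊗ x_N^{(i)}}_{i ∈ X}` is a family of fully product
vectors in `ℂ^{d_1} ⊗ ⋯ ⊗ ℂ^{d_N}` with `|X| ≥ d_1 + ⋯ + d_N − N + 1` such that for each `k`
every `d_k`-tuple of the local vectors `x_k^{(i)}` spans `ℂ^{d_k}`, then no nonzero fully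
product vector is orthogonal to all members of the family. -/
theorem stmt1 (N : ℕ) (hN : 2 ≤ N) (d : Fin N → ℕ) (hd : ∀ i, 1 ≤ d i)
    (X : Type) [Fintype X]
    (x : X → ∀ i, EuclideanSpace ℂ (Fin (d i)))
    (hcard : (∑ i, d i) - N + 1 ≤ Fintype.card X)
    (hspan : ∀ k : Fin N, ∀ T : Finset X, T.card = d k →
      Submodule.span ℂ ((fun i => x i k) '' ↑T) = ⊤)
    (y : ∀ i, EuclideanSpace ℂ (Fin (d i)))
    (horth : ∀ i : X, ⟪prodVec (x i), prodVec y⟫_ℂ = 0) :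
    prodVec y = 0 := by
  classical
  by_cases hy : ∃ k, y k = 0
  · obtain ⟨k, hk⟩ := hy
    ext f
    show ∏ i, y i (f i) = 0
    exact Finset.prod_eq_zero (Finset.mem_univ k) (by rw [hk]; rfl)
  · push_neg at hy
    exfalso
    set S : Fin N → Finset X := fun k => Finset.univ.filter fun i => ⟪x i k, y k⟫_ℂ = 0 with hS
    have hcov : (Finset.univ : Finset X) ⊆ Finset.univ.biUnion S := by
      intro i _
      have h0 : ∏ k, ⟪x i k, y k⟫_ℂ = 0 := by rw [← inner_prodVec]; exact horth i
      obtain ⟨k, -, hk⟩ := Finset.prod_eq_zero_iff.mp h0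
      refine Finset.mem_biUnion.mpr ⟨k, Finset.mem_univ k, ?_⟩
      simp only [hS, Finset.mem_filter, Finset.mem_univ, true_and]; exact hk
    have hSk : ∀ k, (S k).card ≤ d k - 1 := by
      intro k
      by_contra h
      push_neg at h
      have hdk : d k ≤ (S k).card := by omega
      obtain ⟨T, hT, hTcard⟩ := Finset.exists_subset_card_eq hdk
      have hsp := hspan k T hTcard
      have hyk : y k ∈ (Submodule.span ℂ ((fun i => x i k) '' ↑T))ᗮ := by
        rw [Submodule.mem_orthogonal]
        intro u hu
        induction hu using Submodule.span_induction with
        | mem u hu =>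
            obtain ⟨i, hi, rfl⟩ := hu
            exact (Finset.mem_filter.mp (hT hi)).2
        | zero => exact inner_zero_left _
        | add u v _ _ hu hv => rw [inner_add_left, hu, hv, add_zero]
        | smul c u _ hu => rw [inner_smul_left, hu, mul_zero]
      rw [hsp, Submodule.top_orthogonal_eq_bot, Submodule.mem_bot] at hyk
      exact hy k hyk
    have h1 : Fintype.card X ≤ ∑ k, (S k).card := by
      calc Fintype.card X = (Finset.univ : Finset X).card := rfl
        _ ≤ (Finset.univ.biUnion S).card := Finset.card_le_card hcov
        _ ≤ ∑ k, (S k).card := Finset.card_biUnion_le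
    have h2 : ∑ k, (S k).card ≤ ∑ k, (d k - 1) := Finset.sum_le_sum fun k _ => hSk k
    have h3 : ∑ k, (d k - 1 + 1) = ∑ k, d k :=
      Finset.sum_congr rfl fun k _ => Nat.sub_add_cancel (hd k)
    have h4 : ∑ k, (d k - 1 + 1) = (∑ k, (d k - 1)) + N := by
      rw [Finset.sum_add_distrib]; simp
    omega
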